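/- If (x, X, y, Y₁₂, α) ∈ ℝ² × Sym₂(ℝ) × ℝ² × ℝ × ℝ² satisfies the linear conditions (L) and the PSD condition (P5), then at least one of the PSD conditions (P4a) and (P4b) holds; that is, (P4a) and (P4b) cannot both be violated. -/

import Mathlib

open Matrix

set_option linter.unusedVariables false
set_option maxHeartbeats 1000000

/-- Linear conditions (L). -/
def Lcond (x1 x2 X11 X12 X22 y1 y2 Y12 a1 a2 : ℝ) : Prop :=
  X11 ≤ x1 ∧ x1 ≤ y1 ∧ X22 ≤ x2 ∧ x2 ≤ y2 ∧
  max 0 (x1 - a1 + x2 - a2 - Y12) ≤ X12 ∧ X12 ≤ min (x1 - a1) (x2 - a2) ∧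
  0 ≤ a1 ∧ a1 ≤ y1 - Y12 ∧ 0 ≤ a2 ∧ a2 ≤ y2 - Y12 ∧
  max 0 (y1 + y2 - 1) ≤ Y12 ∧ Y12 ≤ min y1 y2

/-- PSD condition (P3). -/
def P3cond (x1 x2 X11 X12 X22 y1 y2 Y12 a1 a2 : ℝ) : Prop :=
  (!![Y12, x1 - a1, x2 - a2;
      x1 - a1, x1 - a1, X12;
      x2 - a2, X12, x2 - a2] : Matrix (Fin 3) (Fin 3) ℝ).PosSemidef

/-- PSD condition (P4a). -/
def P4acond (x1 x2 X11 X12 X22 y1 y2 Y12 a1 a2 : ℝ) : Prop :=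
  (!![y1 - Y12, 0, a1, 0;
      0, Y12, x1 - a1, x2 - a2;
      a1, x1 - a1, X11, X12;
      0, x2 - a2, X12, x2 - a2] : Matrix (Fin 4) (Fin 4) ℝ).PosSemidef

/-- PSD condition (P4b). -/
def P4bcond (x1 x2 X11 X12 X22 y1 y2 Y12 a1 a2 : ℝ) : Prop :=
  (!![y2 - Y12, 0, 0, a2;
      0, Y12, x1 - a1, x2 - a2;
      0, x1 - a1, x1 - a1, X12;
      a2, x2 - a2, X12, X22] : Matrix (Fin 4) (Fin 4) ℝ).PosSemidef

/-- PSD condition (P5). -/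
def P5cond (x1 x2 X11 X12 X22 y1 y2 Y12 a1 a2 : ℝ) : Prop :=
  (!![y1 - Y12, 0, 0, a1, 0;
      0, y2 - Y12, 0, 0, a2;
      0, 0, Y12, x1 - a1, x2 - a2;
      a1, 0, x1 - a1, X11, X12;
      0, a2, x2 - a2, X12, X22] : Matrix (Fin 5) (Fin 5) ℝ).PosSemidef


lemma aux3 (Y b1 b2 X v1 v2 v3 : ℝ) (hY : 0 ≤ Y) (h0 : 0 ≤ X)
    (h1 : X ≤ b1) (h2 : X ≤ b2) (hs : b1 + b2 ≤ Y + X) :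
    0 ≤ Y*v1^2 + b1*v2^2 + b2*v3^2 + 2*b1*v1*v2 + 2*b2*v1*v3 + 2*X*v2*v3 := by
  have hb1 : 0 ≤ b1 := le_trans h0 h1
  have hb2 : 0 ≤ b2 := le_trans h0 h2
  have hb1Y : b1 ≤ Y := by linarith
  have hb2Y : b2 ≤ Y := by linarith
  rcases eq_or_lt_of_le hY with hY0 | hYpos
  · have e1 : b1 = 0 := le_antisymm (by linarith) hb1
    have e2 : b2 = 0 := le_antisymm (by linarith) hb2
    have e3 : X = 0 := le_antisymm (by linarith) h0
    rw [e1, e2, e3, ← hY0]; ring_nf; positivity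
  · -- G ≥ 0
    have hG : 0 ≤ b1*(Y-b1)*v2^2 + 2*(Y*X-b1*b2)*v2*v3 + b2*(Y-b2)*v3^2 := by
      have hP : 0 ≤ b2*(Y-b2) := mul_nonneg hb2 (by linarith)
      rcases eq_or_lt_of_le hP with hP0 | hPpos
      · rcases mul_eq_zero.mp hP0.symm with hb20 | hYb2
        · have eX : X = 0 := le_antisymm (by linarith) h0
          rw [hb20, eX]
          nlinarith [mul_nonneg (mul_nonneg hb1 (by linarith : (0:ℝ) ≤ Y - b1)) (sq_nonneg v2)]
        · have hYb2' : Y = b2 := by linarith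
          have eX : X = b1 := le_antisymm h1 (by linarith)
          rw [hYb2', eX]
          nlinarith [mul_nonneg (mul_nonneg hb1 (by linarith : (0:ℝ) ≤ b2 - b1)) (sq_nonneg v2)]
      · have hE : 0 ≤ (Y-b1-b2+X)*(b1*b2-X*X) + X*(b1-X)*(b2-X) := by
          have t1 : 0 ≤ (Y-b1-b2+X)*(b1*b2-X*X) :=
            mul_nonneg (by linarith) (by nlinarith)
          have t2 : 0 ≤ X*(b1-X)*(b2-X) :=
            mul_nonneg (mul_nonneg h0 (by linarith)) (by linarith)
          linarith
        have hid : (b2*(Y-b2)) * (b1*(Y-b1)*v2^2 + 2*(Y*X-b1*b2)*v2*v3 + b2*(Y-b2)*v3^2)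
            = ((Y*X-b1*b2)*v2 + (b2*(Y-b2))*v3)^2
              + Y*((Y-b1-b2+X)*(b1*b2-X*X) + X*(b1-X)*(b2-X))*v2^2 := by ring
        nlinarith [hid, sq_nonneg ((Y*X-b1*b2)*v2 + (b2*(Y-b2))*v3),
          mul_nonneg (mul_nonneg hY hE) (sq_nonneg v2), hPpos]
    have key : 0 ≤ Y * (Y*v1^2 + b1*v2^2 + b2*v3^2 + 2*b1*v1*v2 + 2*b2*v1*v3 + 2*X*v2*v3) := by
      nlinarith [sq_nonneg (Y*v1 + b1*v2 + b2*v3), hG]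
    nlinarith [key, hYpos]

/-- Under (L) and (P5), at least one of (P4a), (P4b) holds. -/
theorem stmt6 (x1 x2 X11 X12 X22 y1 y2 Y12 a1 a2 : ℝ)
    (hL : Lcond x1 x2 X11 X12 X22 y1 y2 Y12 a1 a2)
    (hP5 : P5cond x1 x2 X11 X12 X22 y1 y2 Y12 a1 a2) :
    P4acond x1 x2 X11 X12 X22 y1 y2 Y12 a1 a2 ∨
      P4bcond x1 x2 X11 X12 X22 y1 y2 Y12 a1 a2 := by
  obtain ⟨h11, hx1y1, h22, hx2y2, hXlo, hXhi, ha1, ha1b, ha2, ha2b, hYlo, hYhi⟩ := hL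
  have hX0 : 0 ≤ X12 := le_trans (le_max_left _ _) hXlo
  have hXs : x1 - a1 + x2 - a2 - Y12 ≤ X12 := le_trans (le_max_right _ _) hXlo
  have hXb1 : X12 ≤ x1 - a1 := le_trans hXhi (min_le_left _ _)
  have hXb2 : X12 ≤ x2 - a2 := le_trans hXhi (min_le_right _ _)
  have hY0 : 0 ≤ Y12 := le_trans (le_max_left _ _) hYlo
  have hb1 : 0 ≤ x1 - a1 := le_trans hX0 hXb1
  have hb2 : 0 ≤ x2 - a2 := le_trans hX0 hXb2
  -- quadratic form of P5
  have hQ5 : ∀ w0 w1 w2 w3 w4 : ℝ, 0 ≤ (y1-Y12)*w0^2 + (y2-Y12)*w1^2 + Y12*w2^2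
      + X11*w3^2 + X22*w4^2 + 2*a1*w0*w3 + 2*a2*w1*w4 + 2*(x1-a1)*w2*w3
      + 2*(x2-a2)*w2*w4 + 2*X12*w3*w4 := by
    intro w0 w1 w2 w3 w4
    have h := hP5.dotProduct_mulVec_nonneg ![w0,w1,w2,w3,w4]
    simp [Matrix.mulVec, dotProduct, Fin.sum_univ_succ] at h
    nlinarith [h]
  -- builders
  rcases le_total X11 (x1 - a1) with hA | hB
  · -- P4b, easy case
    right
    refine Matrix.PosSemidef.of_dotProduct_mulVec_nonneg ?_ ?_
    · ext i j; fin_cases i <;> fin_cases j <;> simp [Matrix.conjTranspose_apply]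
    · intro v
      have h := hQ5 0 (v 0) (v 1) (v 2) (v 3)
      have h2 := mul_nonneg (sub_nonneg.2 hA) (sq_nonneg (v 2))
      simp [Matrix.mulVec, dotProduct, Fin.sum_univ_succ]
      nlinarith [h, h2]
  · rcases le_total (X11*(y1-Y12)) ((x1-a1)*(y1-Y12) + a1^2) with hcle | hcge
    · rcases eq_or_lt_of_le (show (0:ℝ) ≤ y1 - Y12 by linarith) with hβ0 | hβpos
      · -- β1 = 0, a1 = 0, X11 ≥ x1 - a1 : P4a
        have ea : a1 = 0 := le_antisymm (by linarith) ha1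
        left
        refine Matrix.PosSemidef.of_dotProduct_mulVec_nonneg ?_ ?_
        · ext i j; fin_cases i <;> fin_cases j <;> simp [Matrix.conjTranspose_apply]
        · intro v
          have h3 := aux3 Y12 (x1-a1) (x2-a2) X12 (v 1) (v 2) (v 3) hY0 hX0 hXb1 hXb2 (by linarith)
          have h2 := mul_nonneg (sub_nonneg.2 hB) (sq_nonneg (v 2))
          rw [ea] at h3 h2
          simp [Matrix.mulVec, dotProduct, Fin.sum_univ_succ, ea, hβ0.symm]
          nlinarith [h3, h2]
      · -- β1 > 0 : P4b via Schur
        right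
        refine Matrix.PosSemidef.of_dotProduct_mulVec_nonneg ?_ ?_
        · ext i j; fin_cases i <;> fin_cases j <;> simp [Matrix.conjTranspose_apply]
        · intro v
          have h := hQ5 (-(a1*(v 2))) ((y1-Y12)*(v 0)) ((y1-Y12)*(v 1)) ((y1-Y12)*(v 2)) ((y1-Y12)*(v 3))
          have hgap : 0 ≤ (y1-Y12)*(a1^2 + (y1-Y12)*((x1-a1) - X11)) * (v 2)^2 :=
            mul_nonneg (mul_nonneg hβpos.le (by nlinarith [hcle])) (sq_nonneg (v 2))
          have hsq : 0 < (y1-Y12)^2 := by positivity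
          simp [Matrix.mulVec, dotProduct, Fin.sum_univ_succ]
          nlinarith [h, hgap, hsq]
    · -- X11*(y1-Y12) ≥ (x1-a1)*(y1-Y12) + a1^2 : P4a
      left
      refine Matrix.PosSemidef.of_dotProduct_mulVec_nonneg ?_ ?_
      · ext i j; fin_cases i <;> fin_cases j <;> simp [Matrix.conjTranspose_apply]
      · intro v
        have h3 := aux3 Y12 (x1-a1) (x2-a2) X12 (v 1) (v 2) (v 3) hY0 hX0 hXb1 hXb2 (by linarith)
        rcases eq_or_lt_of_le (show (0:ℝ) ≤ y1 - Y12 by linarith) with hβ0 | hβpos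
        · have ea : a1 = 0 := le_antisymm (by linarith) ha1
          have hB2 : x1 - a1 ≤ X11 := hB
          have h2 := mul_nonneg (sub_nonneg.2 hB2) (sq_nonneg (v 2))
          rw [ea] at h3 h2
          simp [Matrix.mulVec, dotProduct, Fin.sum_univ_succ, ea, hβ0.symm]
          nlinarith [h3, h2]
        · have hgap : 0 ≤ ((y1-Y12)*X11 - a1^2 - (y1-Y12)*(x1-a1)) * (v 2)^2 :=
            mul_nonneg (by nlinarith [hcge]) (sq_nonneg (v 2))
          have hsq := sq_nonneg ((y1-Y12)*(v 0) + a1*(v 2))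
          have h3b := mul_nonneg hβpos.le h3
          simp [Matrix.mulVec, dotProduct, Fin.sum_univ_succ]
          nlinarith [hgap, hsq, h3b, hβpos]
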